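/- Let Λ_∘ > 0 be a Hermitian matrix satisfying the fixed point conditions, and X_⊥ a Hermitian matrix with G* X_⊥ G ≡ 0 on the unit circle and Λ_∘ + X_⊥ ≥ 0. Then Θ(Λ_∘ + X_⊥) = Λ_∘ + X_⊥, i.e., Λ_∘ + X_⊥ is also a fixed point of the map Θ(Λ) = ∫ Λ^{1/2} G (Ψ/(G*ΛG)) G* Λ^{1/2}. -/

import Mathlib

open Matrix MeasureTheory Real Filter
open scoped ComplexOrder

noncomputable section

abbrev Mat (n : ℕ) := Matrix (Fin n) (Fin n) ℂ
abbrev Vec (n : ℕ) := Matrix (Fin n) (Fin 1) ℂ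

/-- the point e^{jθ} on the unit circle -/
def circPt (θ : ℝ) : ℂ := Complex.exp (θ * Complex.I)

/-- G(e^{jθ}) = (e^{jθ} I - A)⁻¹ B -/
def Gm {n : ℕ} (A : Mat n) (B : Vec n) (θ : ℝ) : Vec n :=
  (circPt θ • (1 : Mat n) - A)⁻¹ * B

/-- the scalar G* Λ G at e^{jθ} -/
def quad {n : ℕ} (A : Mat n) (B : Vec n) (Λ : Mat n) (θ : ℝ) : ℂ :=
  ((Gm A B θ)ᴴ * Λ * Gm A B θ) 0 0

/-- normalized entrywise matrix integral over the unit circle -/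
def mInt {n : ℕ} (f : ℝ → Mat n) : Mat n :=
  Matrix.of fun i j => (1 / (2 * π) : ℝ) • ∫ θ in (0:ℝ)..(2 * π), f θ i j

/-- normalized scalar (complex) integral over the unit circle -/
def sInt (f : ℝ → ℂ) : ℂ := (1 / (2 * π) : ℝ) • ∫ θ in (0:ℝ)..(2 * π), f θ

/-- normalized scalar (real) integral over the unit circle -/
def sIntR (f : ℝ → ℝ) : ℝ := (1 / (2 * π)) * ∫ θ in (0:ℝ)..(2 * π), f θ

/-- all eigenvalues of A lie in the open unit disc -/
def IsStable {n : ℕ} (A : Mat n) : Prop := ∀ μ ∈ spectrum ℂ A, ‖μ‖ < 1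

/-- (A,B) is a reachable pair: the controllability matrix has full rank -/
def Reachable {n : ℕ} (A : Mat n) (B : Vec n) : Prop :=
  (Matrix.of fun (i : Fin n) (k : Fin n) => (A ^ (k : ℕ) * B) i 0).rank = n

/-- the old Mathlib `Matrix.PosSemidef.sqrt` (removed since), with its old definition -/
def psdSqrt {n : ℕ} {M : Mat n} (hM : M.PosSemidef) : Mat n :=
  hM.1.eigenvectorUnitary.1 * diagonal ((↑) ∘ (√·) ∘ hM.1.eigenvalues) *
  (star hM.1.eigenvectorUnitary : Mat n)

open scoped Classical in
/-- positive semidefinite square root (junk value 0 off the psd cone) -/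
def msqrt {n : ℕ} (M : Mat n) : Mat n :=
  if h : M.PosSemidef then psdSqrt h else 0

/-- the moment map ∫ G (Ψ/(G*ΛG)) G* -/
def moment {n : ℕ} (A : Mat n) (B : Vec n) (Ψ : ℝ → ℝ) (Λ : Mat n) : Mat n :=
  mInt (fun θ => ((Ψ θ : ℂ) / quad A B Λ θ) • (Gm A B θ * (Gm A B θ)ᴴ))

/-- the iteration map Θ(Λ) = ∫ Λ^{1/2} G (Ψ/(G*ΛG)) G* Λ^{1/2} -/
def Theta {n : ℕ} (A : Mat n) (B : Vec n) (Ψ : ℝ → ℝ) (Λ : Mat n) : Mat n :=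
  mInt (fun θ => ((Ψ θ : ℂ) / quad A B Λ θ) •
    (msqrt Λ * (Gm A B θ * (Gm A B θ)ᴴ) * msqrt Λ))

/-- the linearization M of Θ at Λ:
M(X) = X - Λ^{1/2} ∫ (GΨG*/(G*ΛG)) (G*XG/(G*ΛG)) Λ^{1/2} -/
def Mlin {n : ℕ} (A : Mat n) (B : Vec n) (Ψ : ℝ → ℝ) (Λ : Mat n) (X : Mat n) : Mat n :=
  X - msqrt Λ * mInt (fun θ =>
    (((Ψ θ : ℂ) * (((Gm A B θ)ᴴ * X * Gm A B θ) 0 0)) / (quad A B Λ θ) ^ 2) •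
      (Gm A B θ * (Gm A B θ)ᴴ)) * msqrt Λ

/-- the range of the operator Γ : Φ ↦ ∫ G Φ G* on continuous (2π-periodic) functions -/
def RangeGamma {n : ℕ} (A : Mat n) (B : Vec n) : Set (Mat n) :=
  {M | ∃ Φ : ℝ → ℝ, Continuous Φ ∧ (∀ θ, Φ (θ + 2 * π) = Φ θ) ∧
    M = mInt (fun θ => (Φ θ : ℂ) • (Gm A B θ * (Gm A B θ)ᴴ))}

-- auxiliary lemmas (to be inserted above stmt8)
lemma Gm_continuous {n : ℕ} (A : Mat n) (B : Vec n) (hA : IsStable A) :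
    Continuous fun θ => Gm A B θ := by
  have hdet : ∀ θ, IsUnit (circPt θ • (1 : Mat n) - A).det := by
    intro θ
    have hnot : circPt θ ∉ spectrum ℂ A := by
      intro hmem
      have := hA _ hmem
      simp [circPt, Complex.norm_exp] at this
    rw [spectrum.mem_iff, not_not] at hnot
    have heq : (algebraMap ℂ (Mat n)) (circPt θ) - A = circPt θ • (1 : Mat n) - A := by
      simp [Algebra.algebraMap_eq_smul_one]
    rw [heq] at hnot
    exact (Matrix.isUnit_iff_isUnit_det _).mp hnot
  have hMc : Continuous fun θ => circPt θ • (1 : Mat n) - A := by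
    have hc : Continuous circPt := Complex.continuous_exp.comp (by continuity)
    exact (hc.smul continuous_const).sub continuous_const
  have hinv : Continuous fun θ => (circPt θ • (1 : Mat n) - A)⁻¹ := by
    have heq : (fun θ => (circPt θ • (1 : Mat n) - A)⁻¹)
        = fun θ => ((circPt θ • (1 : Mat n) - A).det)⁻¹ • (circPt θ • (1 : Mat n) - A).adjugate := by
      funext θ
      rw [Matrix.inv_def, Ring.inverse_eq_inv']
    rw [heq]
    exact (hMc.matrix_det.inv₀ fun θ => (hdet θ).ne_zero).smul hMc.matrix_adjugate
  exact hinv.matrix_mul continuous_const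

lemma quad_continuous {n : ℕ} (A : Mat n) (B : Vec n) (Λ : Mat n) (hA : IsStable A) :
    Continuous fun θ => quad A B Λ θ := by
  have hG := Gm_continuous A B hA
  exact ((hG.matrix_conjTranspose.matrix_mul continuous_const).matrix_mul hG).matrix_elem 0 0

lemma mInt_conj {n : ℕ} (S : Mat n) (f : ℝ → Mat n)
    (hf : ∀ i j, IntervalIntegrable (fun θ => f θ i j) volume 0 (2 * π)) :
    mInt (fun θ => S * f θ * S) = S * mInt f * S := by
  ext i j
  simp only [mInt, Matrix.of_apply, Matrix.mul_apply]
  have h1 : ∀ θ, (∑ l, (∑ k, S i k * f θ k l) * S l j)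
      = ∑ l, ∑ k, S i k * (f θ k l * S l j) := by
    intro θ; rw [Finset.sum_congr rfl]
    intro l _; rw [Finset.sum_mul]; exact Finset.sum_congr rfl fun k _ => by ring
  simp only [h1]
  have hint : ∀ (l k : Fin n),
      IntervalIntegrable (fun θ => S i k * (f θ k l * S l j)) volume 0 (2 * π) :=
    fun l k => ((hf k l).mul_const _).const_mul _
  have hsum : ∀ l : Fin n, IntervalIntegrable
      (fun θ => ∑ k, S i k * (f θ k l * S l j)) volume 0 (2 * π) := by
    intro l
    have h := IntervalIntegrable.sum (μ := volume) (a := 0) (b := 2 * π) Finset.univ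
      (f := fun k θ => S i k * (f θ k l * S l j)) (fun k _ => hint l k)
    simpa [Finset.sum_fn] using h
  have h2 : (∫ θ in (0:ℝ)..(2 * π), ∑ l, ∑ k, S i k * (f θ k l * S l j))
      = ∑ l, ∑ k, S i k * ∫ θ in (0:ℝ)..(2 * π), f θ k l * S l j := by
    rw [intervalIntegral.integral_finset_sum (fun l _ => hsum l)]
    exact Finset.sum_congr rfl fun l _ => by
      rw [intervalIntegral.integral_finset_sum (fun k _ => hint l k)]
      exact Finset.sum_congr rfl fun k _ => intervalIntegral.integral_const_mul _ _
  rw [h2, Finset.smul_sum]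
  refine Finset.sum_congr rfl fun l _ => ?_
  rw [Finset.smul_sum, Finset.sum_mul]
  refine Finset.sum_congr rfl fun k _ => ?_
  rw [intervalIntegral.integral_mul_const]
  simp only [smul_eq_mul, Complex.real_smul]
  push_cast
  ring

/-- if Λ∘ > 0 satisfies the fixed point conditions and X⊥ is
Hermitian with G* X⊥ G ≡ 0 and Λ∘ + X⊥ ≥ 0, then Λ∘ + X⊥ is a fixed point of Θ. -/
theorem stmt8 {n : ℕ} (A : Mat n) (B : Vec n) (Ψ : ℝ → ℝ) (Λ X : Mat n)
    (hA : IsStable A) (hR : Reachable A B)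
    (hΨc : Continuous Ψ) (hΨpos : ∀ θ, 0 < Ψ θ)
    (hΛ : Λ.PosDef)
    (hq : ∀ θ, 0 < (quad A B Λ θ).re)
    (hmom : moment A B Ψ Λ = 1)
    (hX : X.IsHermitian) (hXperp : ∀ θ : ℝ, (Gm A B θ)ᴴ * X * Gm A B θ = 0)
    (hpsd : (Λ + X).PosSemidef) :
    Theta A B Ψ (Λ + X) = Λ + X := by
  set S := msqrt (Λ + X) with hS
  have hquad : ∀ θ, quad A B (Λ + X) θ = quad A B Λ θ := by
    intro θ
    unfold quad
    rw [Matrix.mul_add, Matrix.add_mul, hXperp θ, add_zero]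
  have hqne : ∀ θ, quad A B Λ θ ≠ 0 := fun θ h => by simpa [h] using hq θ
  have hG := Gm_continuous A B hA
  have hfc : Continuous fun θ => ((Ψ θ : ℂ) / quad A B Λ θ) • (Gm A B θ * (Gm A B θ)ᴴ) := by
    exact ((Complex.continuous_ofReal.comp hΨc).div (quad_continuous A B Λ hA) hqne).smul
      (hG.matrix_mul hG.matrix_conjTranspose)
  have hint : ∀ i j, IntervalIntegrable
      (fun θ => (((Ψ θ : ℂ) / quad A B Λ θ) • (Gm A B θ * (Gm A B θ)ᴴ)) i j)
      volume 0 (2 * π) :=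
    fun i j => (hfc.matrix_elem i j).intervalIntegrable 0 (2 * π)
  have hfun : (fun θ => ((Ψ θ : ℂ) / quad A B (Λ + X) θ) •
        (msqrt (Λ + X) * (Gm A B θ * (Gm A B θ)ᴴ) * msqrt (Λ + X)))
      = fun θ => S * (((Ψ θ : ℂ) / quad A B Λ θ) • (Gm A B θ * (Gm A B θ)ᴴ)) * S := by
    funext θ
    rw [hquad θ, Matrix.mul_smul, Matrix.smul_mul, hS]
  unfold Theta
  rw [hfun, mInt_conj S _ hint]
  have hmm : mInt (fun θ => ((Ψ θ : ℂ) / quad A B Λ θ) • (Gm A B θ * (Gm A B θ)ᴴ)) = 1 := hmom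
  rw [hmm, mul_one, hS]
  unfold msqrt
  rw [dif_pos hpsd]
  unfold psdSqrt
  have hUU : (star hpsd.1.eigenvectorUnitary : Mat n) * (hpsd.1.eigenvectorUnitary : Mat n) = 1 :=
    Unitary.coe_star_mul_self _
  have hD : diagonal ((↑) ∘ (√·) ∘ hpsd.1.eigenvalues) * diagonal ((↑) ∘ (√·) ∘ hpsd.1.eigenvalues)
      = diagonal (RCLike.ofReal ∘ hpsd.1.eigenvalues : Fin n → ℂ) := by
    rw [diagonal_mul_diagonal]; congr 1; funext i
    simp [← Complex.ofReal_mul, Real.mul_self_sqrt (hpsd.eigenvalues_nonneg i)]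
  conv_rhs => rw [hpsd.1.spectral_theorem, Unitary.conjStarAlgAut_apply]
  simp only [mul_assoc]
  rw [← mul_assoc _ (hpsd.1.eigenvectorUnitary : Mat n), hUU, one_mul, ← mul_assoc _ _ (star _ : Mat n), hD]
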